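/- The parallel addition A₁ ∧ A₂ := A₁(A₁+A₂)†A₂ of two symmetric positive semidefinite matrices is symmetric and positive semidefinite, where † denotes the Moore–Penrose pseudoinverse. -/

import Mathlib

open Matrix

/-- `B` is the Moore–Penrose pseudoinverse of `A`. -/
def IsMoorePenroseInv {d : ℕ} (A B : Matrix (Fin d) (Fin d) ℝ) : Prop :=
  A * B * A = A ∧ B * A * B = B ∧ (A * B).transpose = A * B ∧ (B * A).transpose = B * A

noncomputable def Matrix.PosSemidef.sqrt {n : ℕ} {X : Matrix (Fin n) (Fin n) ℝ}
    (_hX : X.PosSemidef) : Matrix (Fin n) (Fin n) ℝ :=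
  open scoped MatrixOrder in CFC.sqrt X

lemma Matrix.PosSemidef.posSemidef_sqrt {n : ℕ} {X : Matrix (Fin n) (Fin n) ℝ}
    (hX : X.PosSemidef) : hX.sqrt.PosSemidef := by
  open scoped MatrixOrder in exact (CFC.sqrt_nonneg X).posSemidef

lemma Matrix.PosSemidef.sqrt_mul_self {n : ℕ} {X : Matrix (Fin n) (Fin n) ℝ}
    (hX : X.PosSemidef) : hX.sqrt * hX.sqrt = X := by
  open scoped MatrixOrder in exact CFC.sqrt_mul_sqrt_self X hX.nonneg

private lemma psd_eq_zero_of_neg {n : ℕ} {X : Matrix (Fin n) (Fin n) ℝ}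
    (hX : X.PosSemidef) (hX' : (-X).PosSemidef) : X = 0 := by
  have hsym : hX.sqrt.conjTranspose = hX.sqrt := hX.posSemidef_sqrt.1
  have hmv : ∀ x : Fin n → ℝ, hX.sqrt *ᵥ x = 0 := by
    intro x
    have hst : star (hX.sqrt *ᵥ x) = star x ᵥ* hX.sqrt := by
      rw [star_mulVec, hsym]
    have hq : star x ⬝ᵥ X *ᵥ x = star (hX.sqrt *ᵥ x) ⬝ᵥ (hX.sqrt *ᵥ x) := by
      conv_lhs => rw [← hX.sqrt_mul_self]
      rw [← mulVec_mulVec, dotProduct_mulVec, hst]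
    have h1 : 0 ≤ star (hX.sqrt *ᵥ x) ⬝ᵥ (hX.sqrt *ᵥ x) :=
      dotProduct_star_self_nonneg _
    have h2 : star x ⬝ᵥ X *ᵥ x ≤ 0 := by
      have := hX'.dotProduct_mulVec_nonneg x
      rw [neg_mulVec, dotProduct_neg] at this
      linarith
    have hz : star (hX.sqrt *ᵥ x) ⬝ᵥ (hX.sqrt *ᵥ x) = 0 := le_antisymm (hq ▸ h2) h1
    exact dotProduct_star_self_eq_zero.mp hz
  have hs : hX.sqrt = 0 := by
    ext i j
    have := congrFun (hmv (Pi.single j 1)) i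
    simpa using this
  rw [← hX.sqrt_mul_self, hs, mul_zero]

private lemma psd_mul_eq_zero {n : ℕ} {M N : Matrix (Fin n) (Fin n) ℝ}
    (hM : M.PosSemidef) (h : N * M * N.conjTranspose = 0) : N * M = 0 := by
  have hsym : hM.sqrt.conjTranspose = hM.sqrt := hM.posSemidef_sqrt.1
  have hNs : N * hM.sqrt = 0 := by
    have hz : ((N * hM.sqrt).conjTranspose).conjTranspose * (N * hM.sqrt).conjTranspose = 0 := by
      rw [conjTranspose_conjTranspose, conjTranspose_mul, hsym]
      calc N * hM.sqrt * (hM.sqrt * N.conjTranspose)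
          = N * (hM.sqrt * hM.sqrt) * N.conjTranspose := by noncomm_ring
        _ = N * M * N.conjTranspose := by rw [hM.sqrt_mul_self]
        _ = 0 := h
    have := conjTranspose_mul_self_eq_zero.mp hz
    simpa using congrArg conjTranspose this
  calc N * M = N * (hM.sqrt * hM.sqrt) := by rw [hM.sqrt_mul_self]
    _ = (N * hM.sqrt) * hM.sqrt := by noncomm_ring
    _ = 0 := by rw [hNs, zero_mul]

theorem parallelSum_posSemidef {d : ℕ} (A₁ A₂ B : Matrix (Fin d) (Fin d) ℝ)
    (h₁ : A₁.PosSemidef) (h₂ : A₂.PosSemidef)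
    (hB : IsMoorePenroseInv (A₁ + A₂) B) :
    (A₁ * B * A₂).IsHermitian ∧ (A₁ * B * A₂).PosSemidef := by
  set S := A₁ + A₂ with hSdef
  obtain ⟨hm1, hm2, hm3, hm4⟩ := hB
  have hS : S.PosSemidef := h₁.add h₂
  have hSt : Sᵀ = S := by
    have h : Sᴴ = S := hS.1
    rwa [conjTranspose_eq_transpose_of_trivial] at h
  have hA₁t : A₁ᵀ = A₁ := by
    have h : A₁ᴴ = A₁ := h₁.1
    rwa [conjTranspose_eq_transpose_of_trivial] at h
  have hA₂t : A₂ᵀ = A₂ := by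
    have h : A₂ᴴ = A₂ := h₂.1
    rwa [conjTranspose_eq_transpose_of_trivial] at h
  -- B is symmetric (uniqueness of the Moore–Penrose inverse)
  set C := Bᵀ with hCdef
  have hSC : S * C = B * S := by
    calc S * C = Sᵀ * Bᵀ := by rw [hSt]
      _ = (B * S)ᵀ := (transpose_mul _ _).symm
      _ = B * S := hm4
  have hCS : C * S = S * B := by
    calc C * S = Bᵀ * Sᵀ := by rw [hSt]
      _ = (S * B)ᵀ := (transpose_mul _ _).symm
      _ = S * B := hm3
  have hc1 : S * C * S = S := by
    have h := congrArg transpose hm1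
    rw [transpose_mul, transpose_mul, hSt] at h
    calc S * C * S = S * (Bᵀ * S) := by rw [hCdef]; noncomm_ring
      _ = S := h
  have hc2 : C * (S * C) = C := by
    have h := congrArg transpose hm2
    rw [transpose_mul, transpose_mul, hSt] at h
    calc C * (S * C) = Bᵀ * (S * Bᵀ) := rfl
      _ = Bᵀ := h
  have hc3 : (S * C)ᵀ = S * C := by rw [hSC, hm4]
  have hc4 : (C * S)ᵀ = C * S := by rw [hCS, hm3]
  have t1 : (S * B) * (S * C) = S * C := by
    calc (S * B) * (S * C) = (S * B * S) * C := by noncomm_ring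
      _ = S * C := by rw [hm1]
  have t2 : (S * B) * (S * C) = S * B := by
    calc (S * B) * (S * C) = (S * B)ᵀ * (S * C)ᵀ := by rw [hm3, hc3]
      _ = ((S * C) * (S * B))ᵀ := (transpose_mul _ _).symm
      _ = ((S * C * S) * B)ᵀ := by rw [show (S * C) * (S * B) = (S * C * S) * B from by noncomm_ring]
      _ = (S * B)ᵀ := by rw [hc1]
      _ = S * B := hm3
  have e1 : S * B = S * C := t2.symm.trans t1
  have t3 : (C * S) * (B * S) = C * S := by
    calc (C * S) * (B * S) = C * (S * B * S) := by noncomm_ring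
      _ = C * S := by rw [hm1]
  have t4 : (C * S) * (B * S) = B * S := by
    calc (C * S) * (B * S) = (C * S)ᵀ * (B * S)ᵀ := by rw [hc4, hm4]
      _ = ((B * S) * (C * S))ᵀ := (transpose_mul _ _).symm
      _ = (B * (S * C * S))ᵀ := by rw [show (B * S) * (C * S) = B * (S * C * S) from by noncomm_ring]
      _ = (B * S)ᵀ := by rw [hc1]
      _ = B * S := hm4
  have e2 : B * S = C * S := t4.symm.trans t3
  have hBt : Bᵀ = B := by
    calc Bᵀ = C := rfl
      _ = C * (S * C) := hc2.symm
      _ = C * (S * B) := by rw [← e1]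
      _ = (C * S) * B := by noncomm_ring
      _ = (B * S) * B := by rw [← e2]
      _ = B := hm2
  -- the projection P = 1 - S * B kills A₁ and A₂
  set P : Matrix (Fin d) (Fin d) ℝ := 1 - S * B with hPdef
  have hPS : P * S = 0 := by
    rw [hPdef, sub_mul, one_mul, hm1, sub_self]
  have hXY : P * A₁ * Pᴴ + P * A₂ * Pᴴ = 0 := by
    have h : P * A₁ * Pᴴ + P * A₂ * Pᴴ = P * (A₁ + A₂) * Pᴴ := by noncomm_ring
    rw [h, ← hSdef, hPS, zero_mul]
  have hXpsd := h₁.mul_mul_conjTranspose_same P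
  have hYpsd := h₂.mul_mul_conjTranspose_same P
  have hXzero : P * A₁ * Pᴴ = 0 :=
    psd_eq_zero_of_neg hXpsd (by rw [neg_eq_of_add_eq_zero_right hXY]; exact hYpsd)
  have hYzero : P * A₂ * Pᴴ = 0 :=
    psd_eq_zero_of_neg hYpsd (by rw [neg_eq_of_add_eq_zero_left hXY]; exact hXpsd)
  have hPA₁ : P * A₁ = 0 := psd_mul_eq_zero h₁ hXzero
  have hPA₂ : P * A₂ = 0 := psd_mul_eq_zero h₂ hYzero
  have hSBA₁ : S * B * A₁ = A₁ := by
    have h : (1 - S * B) * A₁ = 0 := hPA₁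
    rw [sub_mul, one_mul, sub_eq_zero] at h
    exact h.symm
  have hSBA₂ : S * B * A₂ = A₂ := by
    have h : (1 - S * B) * A₂ = 0 := hPA₂
    rw [sub_mul, one_mul, sub_eq_zero] at h
    exact h.symm
  -- transposed versions
  have hA₁BS : A₁ * (B * S) = A₁ := by
    have h := congrArg transpose hSBA₁
    rwa [transpose_mul, transpose_mul, hA₁t, hBt, hSt] at h
  have hA₂BS : A₂ * (B * S) = A₂ := by
    have h := congrArg transpose hSBA₂
    rwa [transpose_mul, transpose_mul, hA₂t, hBt, hSt] at h
  -- hermitian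
  have hform : A₁ * B * A₂ = A₁ - A₁ * B * A₁ := by
    have h : A₁ * B * S = A₁ := by rw [Matrix.mul_assoc]; exact hA₁BS
    calc A₁ * B * A₂ = A₁ * B * S - A₁ * B * A₁ := by
          rw [hSdef]; noncomm_ring
      _ = A₁ - A₁ * B * A₁ := by rw [h]
  have hherm : (A₁ * B * A₂).IsHermitian := by
    show (A₁ * B * A₂)ᴴ = A₁ * B * A₂
    rw [conjTranspose_eq_transpose_of_trivial, hform, transpose_sub, transpose_mul,
      transpose_mul, hA₁t, hBt]
    noncomm_ring
  have hswap : A₂ * B * A₁ = A₁ * B * A₂ := by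
    calc A₂ * B * A₁ = (A₁ * B * A₂)ᵀ := by
          rw [transpose_mul, transpose_mul, hA₁t, hBt, hA₂t]; noncomm_ring
      _ = A₁ * B * A₂ := by
          rw [← conjTranspose_eq_transpose_of_trivial]; exact hherm
  -- key identity
  have hkey : A₁ * B * A₂ = (B * A₁)ᴴ * A₂ * (B * A₁) + (B * A₂)ᴴ * A₁ * (B * A₂) := by
    have ht1 : (B * A₁)ᴴ = A₁ * B := by
      rw [conjTranspose_eq_transpose_of_trivial, transpose_mul, hA₁t, hBt]
    have ht2 : (B * A₂)ᴴ = A₂ * B := by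
      rw [conjTranspose_eq_transpose_of_trivial, transpose_mul, hA₂t, hBt]
    rw [ht1, ht2]
    have e2' : A₂ * B * A₁ * (B * A₂) = A₁ * B * A₂ * (B * A₂) := by rw [hswap]
    calc A₁ * B * A₂
        = A₁ * B * (A₂ * (B * S)) := by rw [hA₂BS]
      _ = A₁ * B * A₂ * (B * A₁) + A₁ * B * A₂ * (B * A₂) := by
          rw [hSdef]; noncomm_ring
      _ = A₁ * B * A₂ * (B * A₁) + A₂ * B * A₁ * (B * A₂) := by rw [e2']
  refine ⟨hherm, ?_⟩
  rw [hkey]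
  exact (h₂.conjTranspose_mul_mul_same (B * A₁)).add (h₁.conjTranspose_mul_mul_same (B * A₂))
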